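/- Six Regions, Region 3: for all integers n, k with 0 > n ≥ k, the Roman coefficient satisfies ⌊n choose k⌉ = (-1)^(n+k)·C(-k-1, n-k). -/

import Mathlib

/-- Roman factorial of an integer, as a rational number. -/
def romanFactorial (n : ℤ) : ℚ :=
  if 0 ≤ n then (n.toNat.factorial : ℚ)
  else (-1 : ℚ) ^ (n + 1) / ((-n - 1).toNat.factorial : ℚ)

/-- Roman coefficient of two integers. -/
def romanCoeff (n k : ℤ) : ℚ :=
  romanFactorial n / (romanFactorial k * romanFactorial (n - k))

/-- Region 3: if `0 > n ≥ k` then `⌊n choose k⌉ = (-1)^(n+k) C(-k-1, n-k)`. -/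
theorem romanCoeff_region3 (n k : ℤ) (h1 : 0 > n) (h2 : n ≥ k) :
    romanCoeff n k = (-1 : ℚ) ^ (n + k) * ((-k - 1).toNat.choose (n - k).toNat : ℚ) := by
  have hn : ¬ 0 ≤ n := by omega
  have hk : ¬ 0 ≤ k := by omega
  have hnk : 0 ≤ n - k := by omega
  simp only [romanCoeff, romanFactorial, if_neg hn, if_neg hk, if_pos hnk]
  set a := (-n-1).toNat with ha
  set d := (n-k).toNat with hd
  have hb : (-k-1).toNat = a + d := by omega
  rw [hb]
  have hch : ((a + d).choose d : ℚ) * a.factorial * d.factorial = (a+d).factorial := by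
    rw [Nat.add_comm a d, Nat.choose_symm_add, mul_right_comm]
    exact_mod_cast congrArg (Nat.cast : ℕ → ℚ) (Nat.add_choose_mul_factorial_mul_factorial d a)
  have hfa : (a.factorial : ℚ) ≠ 0 := Nat.cast_ne_zero.mpr a.factorial_ne_zero
  have hfd : (d.factorial : ℚ) ≠ 0 := Nat.cast_ne_zero.mpr d.factorial_ne_zero
  have hfb : ((a+d).factorial : ℚ) ≠ 0 := Nat.cast_ne_zero.mpr (a+d).factorial_ne_zero
  have hne : (-1 : ℚ) ≠ 0 := by norm_num
  have hsign : (-1:ℚ)^(n+1) * (-1:ℚ)^(k+1) = (-1:ℚ)^(n+k) := by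
    rw [← zpow_add₀ hne]
    have : n + 1 + (k + 1) = (n+k) + 2*1 := by ring
    rw [this, zpow_add₀ hne]
    norm_num
  have hsq : (-1:ℚ)^(k+1) * (-1:ℚ)^(k+1) = 1 := by
    rw [← zpow_add₀ hne]
    have : k + 1 + (k + 1) = 2*(k+1) := by ring
    rw [this, zpow_mul]
    norm_num
  rw [← hch]
  field_simp
  set X : ℚ := ((a+d).choose d : ℚ) * (a.factorial : ℚ) * (d.factorial : ℚ) with hX
  linear_combination ((a+d).choose d : ℚ)*(-1:ℚ)^(k+1)*hsign - ((a+d).choose d : ℚ)*(-1:ℚ)^(n+1)*hsq
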